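/- Let q be a prime, a, b integers not both divisible by q, and L := {(x, y) ∈ ℤ × ℤ : q divides a·x + b·y}. Suppose v = (v₁, v₂) ∈ L satisfies 0 < v₁² + v₂² ≤ q/4 and v has minimal Euclidean norm among the nonzero elements of L. Then gcd(v₁, v₂) = 1, and every nonzero w ∈ L with ‖w‖ ≤ ‖v‖ satisfies w = v or w = −v. -/

import Mathlib

/-- A shortest nonzero vector `v` of the congruence lattice
`{(x, y) : q ∣ a·x + b·y}` with `‖v‖² ≤ q/4` is primitive and is, up to sign, the
unique nonzero lattice vector of norm at most `‖v‖`. -/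
theorem congruence_lattice_shortest_vector
    (q : ℕ) (hq : q.Prime) (a b : ℤ) (hab : ¬ ((q : ℤ) ∣ a ∧ (q : ℤ) ∣ b))
    (v₁ v₂ : ℤ) (hv : (q : ℤ) ∣ a * v₁ + b * v₂)
    (hpos : 0 < v₁ ^ 2 + v₂ ^ 2) (hsmall : 4 * (v₁ ^ 2 + v₂ ^ 2) ≤ (q : ℤ))
    (hmin : ∀ w₁ w₂ : ℤ, (q : ℤ) ∣ a * w₁ + b * w₂ → (w₁, w₂) ≠ (0, 0) →
      v₁ ^ 2 + v₂ ^ 2 ≤ w₁ ^ 2 + w₂ ^ 2) :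
    Int.gcd v₁ v₂ = 1 ∧
    ∀ w₁ w₂ : ℤ, (q : ℤ) ∣ a * w₁ + b * w₂ → (w₁, w₂) ≠ (0, 0) →
      w₁ ^ 2 + w₂ ^ 2 ≤ v₁ ^ 2 + v₂ ^ 2 →
      (w₁, w₂) = (v₁, v₂) ∨ (w₁, w₂) = (-v₁, -v₂) := by
  have hqz : (1:ℤ) < q := by exact_mod_cast hq.one_lt
  have hqpos : (0:ℤ) < q := by linarith
  have hqprime : Prime (q : ℤ) := by
    rw [Int.prime_iff_natAbs_prime]; simpa using hq
  have hvne : ¬ (v₁ = 0 ∧ v₂ = 0) := by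
    rintro ⟨h1, h2⟩
    simp [h1, h2] at hpos
  have hgcd : Int.gcd v₁ v₂ = 1 := by
    have hgne : Int.gcd v₁ v₂ ≠ 0 := fun h => hvne (Int.gcd_eq_zero_iff.mp h)
    have hg0 : 0 < ((Int.gcd v₁ v₂ : ℤ)) := by
      exact_mod_cast Nat.pos_of_ne_zero hgne
    obtain ⟨u₁, hu₁⟩ : ((Int.gcd v₁ v₂ : ℤ)) ∣ v₁ := Int.gcd_dvd_left v₁ v₂
    obtain ⟨u₂, hu₂⟩ : ((Int.gcd v₁ v₂ : ℤ)) ∣ v₂ := Int.gcd_dvd_right v₁ v₂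
    set g : ℤ := ((Int.gcd v₁ v₂ : ℤ)) with hgdef
    have hqg : ¬ (q : ℤ) ∣ g := by
      intro hd
      obtain ⟨c₁, hc₁⟩ : (q:ℤ) ∣ v₁ := hd.trans ⟨u₁, hu₁⟩
      obtain ⟨c₂, hc₂⟩ : (q:ℤ) ∣ v₂ := hd.trans ⟨u₂, hu₂⟩
      have hqq : (q:ℤ) < (q:ℤ)^2 := by nlinarith
      rcases not_and_or.mp hvne with h | h
      · have hc : c₁ ≠ 0 := by rintro rfl; simp [hc₁] at h
        have h1 : 1 ≤ c₁ ^ 2 := by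
          nlinarith [Int.one_le_abs (show c₁ ≠ 0 from hc), sq_abs c₁, abs_nonneg c₁]
        have hv1 : v₁ ^ 2 = (q:ℤ)^2 * c₁^2 := by rw [hc₁]; ring
        nlinarith [sq_nonneg v₂, sq_nonneg (q:ℤ)]
      · have hc : c₂ ≠ 0 := by rintro rfl; simp [hc₂] at h
        have h1 : 1 ≤ c₂ ^ 2 := by
          nlinarith [Int.one_le_abs (show c₂ ≠ 0 from hc), sq_abs c₂, abs_nonneg c₂]
        have hv2 : v₂ ^ 2 = (q:ℤ)^2 * c₂^2 := by rw [hc₂]; ring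
        nlinarith [sq_nonneg v₁, sq_nonneg (q:ℤ)]
    have hdvd : (q : ℤ) ∣ a * u₁ + b * u₂ := by
      have hmul : (q : ℤ) ∣ g * (a * u₁ + b * u₂) := by
        have he : a * v₁ + b * v₂ = g * (a * u₁ + b * u₂) := by
          rw [hu₁, hu₂]; ring
        rwa [he] at hv
      rcases hqprime.dvd_mul.mp hmul with h | h
      · exact absurd h hqg
      · exact h
    have hune : (u₁, u₂) ≠ (0, 0) := by
      intro h
      apply hvne
      have h1 : u₁ = 0 := congrArg Prod.fst h
      have h2 : u₂ = 0 := congrArg Prod.snd h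
      constructor <;> simp [hu₁, hu₂, h1, h2]
    have hmin' := hmin u₁ u₂ hdvd hune
    have hkey : v₁ ^ 2 + v₂ ^ 2 = g ^ 2 * (u₁ ^ 2 + u₂ ^ 2) := by
      rw [hu₁, hu₂]; ring
    have hU : 0 < u₁ ^ 2 + u₂ ^ 2 := by nlinarith [hkey, sq_nonneg g]
    have hg1 : g = 1 := by
      by_contra hne
      have h2 : 2 ≤ g := by omega
      have h4 : 4 ≤ g ^ 2 := by nlinarith
      nlinarith
    have : (Int.gcd v₁ v₂ : ℤ) = 1 := hgdef ▸ hg1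
    exact_mod_cast this
  refine ⟨hgcd, ?_⟩
  intro w₁ w₂ hw hwne hle
  have heq : w₁ ^ 2 + w₂ ^ 2 = v₁ ^ 2 + v₂ ^ 2 :=
    le_antisymm hle (hmin w₁ w₂ hw hwne)
  have hqd : (q : ℤ) ∣ v₁ * w₂ - v₂ * w₁ := by
    have hda : (q : ℤ) ∣ a * (v₁ * w₂ - v₂ * w₁) := by
      have he : a * (v₁ * w₂ - v₂ * w₁)
          = w₂ * (a * v₁ + b * v₂) - v₂ * (a * w₁ + b * w₂) := by ring
      rw [he]
      exact dvd_sub (Dvd.dvd.mul_left hv _) (Dvd.dvd.mul_left hw _)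
    have hdb : (q : ℤ) ∣ b * (v₁ * w₂ - v₂ * w₁) := by
      have he : b * (v₁ * w₂ - v₂ * w₁)
          = v₁ * (a * w₁ + b * w₂) - w₁ * (a * v₁ + b * v₂) := by ring
      rw [he]
      exact dvd_sub (Dvd.dvd.mul_left hw _) (Dvd.dvd.mul_left hv _)
    rcases hqprime.dvd_mul.mp hda with h | h
    · rcases hqprime.dvd_mul.mp hdb with h' | h'
      · exact absurd ⟨h, h'⟩ hab
      · exact h'
    · exact h
  have hd0 : v₁ * w₂ - v₂ * w₁ = 0 := by
    by_contra hne
    obtain ⟨c, hc⟩ := hqd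
    have hc0 : c ≠ 0 := by rintro rfl; simp [hc] at hne
    have h1 : 1 ≤ c ^ 2 := by
      nlinarith [Int.one_le_abs (show c ≠ 0 from hc0), sq_abs c, abs_nonneg c]
    have hcs : ((q:ℤ) * c) ^ 2 ≤ (v₁ ^ 2 + v₂ ^ 2) * (w₁ ^ 2 + w₂ ^ 2) := by
      rw [← hc]
      nlinarith [sq_nonneg (v₁ * w₁ + v₂ * w₂)]
    nlinarith [heq, hsmall, hpos, mul_pos hqpos hqpos, sq_nonneg (q:ℤ)]
  obtain ⟨x, y, hxy⟩ : IsCoprime v₁ v₂ := Int.isCoprime_iff_gcd_eq_one.mpr hgcd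
  obtain ⟨k, hk1, hk2⟩ : ∃ k : ℤ, w₁ = k * v₁ ∧ w₂ = k * v₂ :=
    ⟨x * w₁ + y * w₂,
      by linear_combination (-y) * hd0 - w₁ * hxy,
      by linear_combination x * hd0 - w₂ * hxy⟩
  have hksq : (k ^ 2 - 1) * (v₁ ^ 2 + v₂ ^ 2) = 0 := by
    linear_combination heq - (w₁ + k * v₁) * hk1 - (w₂ + k * v₂) * hk2
  have hk2' : k ^ 2 = 1 := by
    rcases mul_eq_zero.mp hksq with h | h
    · linarith
    · exact absurd h (by linarith)
  have hkk : k = 1 ∨ k = -1 := by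
    have : IsUnit k := IsUnit.of_mul_eq_one (a := k) k (by linear_combination hk2')
    exact Int.isUnit_iff.mp this
  rcases hkk with h | h
  · left; rw [hk1, hk2, h]; simp
  · right; rw [hk1, hk2, h]; simp
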